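/- Let m > 1, d ≥ 2, t be integers with gcd(d,m) = 1 and gcd(d,t) = 1. Then the sum over k from 0 to m−1 of [2dk+t] · (q^t;q^d)_k^2 (aq^t;q^d)_k (q^t/a;q^d)_k / ((q^d;q^d)_k^2 (aq^d;q^d)_k (q^d/a;q^d)_k) · q^{(d−2t)k} is congruent to 0 modulo Φ_m(q), as an identity of rational functions in a and q. -/

import Mathlib

open Polynomial Finset

/-- The q-shifted factorial `(x; r)_k = (1-x)(1-x r)⋯(1-x r^(k-1))`. -/
noncomputable def qPoch {F : Type*} [Field F] (x r : F) (k : ℕ) : F :=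
  ∏ i ∈ Finset.range k, (1 - x * r ^ i)

/-- The q-integer `[z] = (1-q^z)/(1-q)` (for an arbitrary integer `z`). -/
noncomputable def qInt {F : Type*} [Field F] (q : F) (z : ℤ) : F :=
  (1 - q ^ z) / (1 - q)

/-- The rational function `x ∈ ℚ(a)(q)` is ≡ 0 modulo the polynomial `M ∈ ℚ(a)[q]`:
its numerator in lowest terms is divisible by `M`, i.e. `x = M·f/g` with `g` coprime to `M`.
Here the coefficient field `RatFunc ℚ` is the field of rational functions in `a`. -/
def ratCongr2 (M : Polynomial (RatFunc ℚ)) (x : RatFunc (RatFunc ℚ)) : Prop :=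
  ∃ f g : Polynomial (RatFunc ℚ), IsCoprime M g ∧
    x * algebraMap (Polynomial (RatFunc ℚ)) (RatFunc (RatFunc ℚ)) g =
      algebraMap (Polynomial (RatFunc ℚ)) (RatFunc (RatFunc ℚ)) M *
        algebraMap (Polynomial (RatFunc ℚ)) (RatFunc (RatFunc ℚ)) f

section Part2
variable {Ω : Type*} [Field Ω]

lemma prod_zpow_fn (ρ : Ω) (hρ : ρ ≠ 0) (s : Finset ℕ) (f : ℕ → ℤ) :
    ∏ j ∈ s, ρ ^ (f j) = ρ ^ (∑ j ∈ s, f j) := by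
  induction s using Finset.cons_induction with
  | empty => simp
  | cons a s ha ih => rw [Finset.prod_cons, Finset.sum_cons, zpow_add₀ hρ, ih]

lemma flip_factor (ρ x : Ω) (hρ : ρ ≠ 0) (hx : x ≠ 0) (w : ℤ) :
    1 - x * ρ ^ w = (-1) * x * ρ ^ w * (1 - x⁻¹ * ρ ^ (-w)) := by
  rw [zpow_neg, mul_sub]
  rw [show (-1) * x * ρ ^ w * (x⁻¹ * (ρ ^ w)⁻¹) = -((x * x⁻¹) * (ρ ^ w * (ρ ^ w)⁻¹)) from by ring]
  rw [mul_inv_cancel₀ hx, mul_inv_cancel₀ (zpow_ne_zero _ hρ)]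
  ring

lemma rev_lemma (ρ : Ω) (hρ : ρ ≠ 0) (D : ℤ) (n : ℕ) (x : Ω) (hx : x ≠ 0)
    (k : ℕ) (hk : k ≤ n) :
    qPoch x (ρ ^ D) n = qPoch x (ρ ^ D) (n - k) *
      ((-1) ^ k * x ^ k * ρ ^ (D * ∑ j ∈ Finset.range k, ((n : ℤ) - 1 - j))) *
      qPoch (x⁻¹ * ρ ^ (D * (1 - (n : ℤ)))) (ρ ^ D) k := by
  obtain ⟨l, rfl⟩ : ∃ l, n = l + k := ⟨n - k, by omega⟩
  have hcast : ∀ i : ℕ, (ρ ^ D) ^ i = ρ ^ (D * i) := by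
    intro i; rw [← zpow_natCast (ρ ^ D), ← zpow_mul]
  have hlk : l + k - k = l := by omega
  unfold qPoch
  rw [Finset.prod_range_add (fun i => (1 - x * (ρ ^ D) ^ i)) l k, hlk, mul_assoc]
  congr 1
  have hrefl : ∏ j ∈ Finset.range k, (1 - x * (ρ ^ D) ^ (l + j))
      = ∏ j ∈ Finset.range k, (1 - x * (ρ ^ D) ^ (l + k - 1 - j)) := by
    rw [← Finset.prod_range_reflect (fun j => (1 - x * (ρ ^ D) ^ (l + j))) k]
    apply Finset.prod_congr rfl
    intro j hj
    simp only [Finset.mem_range] at hj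
    rw [show l + (k - 1 - j) = l + k - 1 - j by omega]
  rw [hrefl]
  have hterm : ∀ j ∈ Finset.range k, (1 - x * (ρ ^ D) ^ (l + k - 1 - j))
      = ((-1) * x * ρ ^ (D * (((l + k : ℕ) : ℤ) - 1 - j)))
        * (1 - (x⁻¹ * ρ ^ (D * (1 - ((l + k : ℕ) : ℤ)))) * (ρ ^ D) ^ j) := by
    intro j hj
    simp only [Finset.mem_range] at hj
    have h1 : (((l + k : ℕ) : ℤ) - 1 - j) = ((l + k - 1 - j : ℕ) : ℤ) := by push_cast; omega
    have h2 : (1 - (x⁻¹ * ρ ^ (D * (1 - ((l + k : ℕ):ℤ)))) * (ρ ^ D) ^ j)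
        = 1 - x⁻¹ * ρ ^ (-(D * (((l + k : ℕ):ℤ) - 1 - j))) := by
      rw [hcast, mul_assoc, ← zpow_add₀ hρ]
      ring_nf
    rw [h2, hcast, ← h1, flip_factor ρ x hρ hx (D * (((l + k : ℕ):ℤ) - 1 - j))]
  rw [Finset.prod_congr rfl hterm, Finset.prod_mul_distrib, Finset.prod_mul_distrib,
    Finset.prod_mul_distrib]
  simp only [Finset.prod_const, Finset.card_range]
  rw [prod_zpow_fn ρ hρ _ (fun j => D * (((l + k : ℕ):ℤ) - 1 - j)), ← Finset.mul_sum]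

lemma assemble (k : ℕ) (P1 P2 P3 Q1 Q2 Q3 R1 R2 R3 x u E : Ω) (hu : u ≠ 0)
    (h1 : R1 = P1 * ((-1) ^ k * x ^ k * E) * Q1)
    (h2 : R2 = P2 * ((-1) ^ k * (u * x) ^ k * E) * Q2)
    (h3 : R3 = P3 * ((-1) ^ k * (x / u) ^ k * E) * Q3) :
    P1 ^ 2 * P2 * P3 * (x ^ (4 * k) * E ^ 4) * (Q1 ^ 2 * Q2 * Q3)
      = R1 ^ 2 * R2 * R3 := by
  have hs : (-1 : Ω) ^ k * (-1) ^ k = 1 := by rw [← mul_pow]; norm_num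
  have huk : u ^ k * (u⁻¹) ^ k = 1 := by rw [← mul_pow, mul_inv_cancel₀ hu, one_pow]
  have key : ((-1 : Ω) ^ k * x ^ k * E) ^ 2 * ((-1) ^ k * (u * x) ^ k * E)
      * ((-1) ^ k * (x / u) ^ k * E) = x ^ (4 * k) * E ^ 4 := by
    rw [div_eq_mul_inv, mul_pow u x k, mul_pow x u⁻¹ k]
    calc ((-1 : Ω) ^ k * x ^ k * E) ^ 2 * ((-1) ^ k * (u ^ k * x ^ k) * E)
        * ((-1) ^ k * (x ^ k * (u⁻¹) ^ k) * E)
        = (((-1 : Ω) ^ k * (-1) ^ k) * ((-1) ^ k * (-1) ^ k)) * (u ^ k * (u⁻¹) ^ k)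
          * (x ^ k * x ^ k * (x ^ k * x ^ k)) * (E ^ 2 * E * E) := by ring
      _ = x ^ (4 * k) * E ^ 4 := by rw [hs, huk]; ring
  rw [h1, h2, h3]
  calc P1 ^ 2 * P2 * P3 * (x ^ (4 * k) * E ^ 4) * (Q1 ^ 2 * Q2 * Q3)
      = (x ^ (4 * k) * E ^ 4) * (P1 ^ 2 * P2 * P3 * (Q1 ^ 2 * Q2 * Q3)) := by ring
    _ = (((-1 : Ω) ^ k * x ^ k * E) ^ 2 * ((-1) ^ k * (u * x) ^ k * E)
          * ((-1) ^ k * (x / u) ^ k * E)) * (P1 ^ 2 * P2 * P3 * (Q1 ^ 2 * Q2 * Q3)) := by rw [key]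
    _ = (P1 * ((-1) ^ k * x ^ k * E) * Q1) ^ 2 * (P2 * ((-1) ^ k * (u * x) ^ k * E) * Q2)
          * (P3 * ((-1) ^ k * (x / u) ^ k * E) * Q3) := by ring

end Part2

lemma gauss_int (n : ℕ) : (∑ i ∈ Finset.range n, (i : ℤ)) * 2 = (n : ℤ) * ((n : ℤ) - 1) := by
  induction n with
  | zero => simp
  | succ p ih =>
    rw [Finset.sum_range_succ]
    push_cast
    push_cast at ih
    linarith

section Key
variable {Ω : Type*} [Field Ω] [CharZero Ω]

theorem key_sum (m d : ℕ) (hm : 1 < m) (hdm : Nat.Coprime d m) (t : ℤ)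
    (ρ α : Ω) (hρprim : IsPrimitiveRoot ρ m) (hα0 : α ≠ 0)
    (hα1 : ∀ z : ℤ, α * ρ ^ z ≠ 1) (hα2 : ∀ z : ℤ, ρ ^ z ≠ α) :
    ∑ k ∈ Finset.range m,
      qInt ρ (2 * (d : ℤ) * k + t) *
        (qPoch (ρ ^ t) (ρ ^ (d : ℤ)) k ^ 2 * qPoch (α * ρ ^ t) (ρ ^ (d : ℤ)) k *
          qPoch (ρ ^ t / α) (ρ ^ (d : ℤ)) k) /
        (qPoch (ρ ^ (d : ℤ)) (ρ ^ (d : ℤ)) k ^ 2 * qPoch (α * ρ ^ (d : ℤ)) (ρ ^ (d : ℤ)) k *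
          qPoch (ρ ^ (d : ℤ) / α) (ρ ^ (d : ℤ)) k) *
        ρ ^ (((d : ℤ) - 2 * t) * k) = 0 := by
  have hm0 : m ≠ 0 := by omega
  set D : ℤ := (d : ℤ) with hD
  set T : ℕ → Ω := fun k =>
    qInt ρ (2 * D * k + t) *
      (qPoch (ρ ^ t) (ρ ^ D) k ^ 2 * qPoch (α * ρ ^ t) (ρ ^ D) k *
        qPoch (ρ ^ t / α) (ρ ^ D) k) /
      (qPoch (ρ ^ D) (ρ ^ D) k ^ 2 * qPoch (α * ρ ^ D) (ρ ^ D) k *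
        qPoch (ρ ^ D / α) (ρ ^ D) k) *
      ρ ^ ((D - 2 * t) * k) with hT
  show ∑ k ∈ Finset.range m, T k = 0
  have hzone : ∀ z : ℤ, ρ ^ z = 1 ↔ (m : ℤ) ∣ z := fun z => hρprim.zpow_eq_one_iff_dvd z
  have hρ0 : ρ ≠ 0 := by
    intro h
    have h1 : ρ ^ (m : ℤ) = 1 := (hzone _).2 dvd_rfl
    rw [h, zero_zpow _ (by exact_mod_cast hm0)] at h1
    exact zero_ne_one h1
  have hshift : ∀ u v : ℤ, (m : ℤ) ∣ (u - v) → ρ ^ u = ρ ^ v := by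
    intro u v huv
    have h1 : ρ ^ u = ρ ^ v * ρ ^ (u - v) := by
      rw [← zpow_add₀ hρ0]; congr 1; ring
    rw [h1, (hzone _).2 huv, mul_one]
  have hfuse : ∀ (a : ℤ) (c : ℕ), (ρ ^ a) ^ c = ρ ^ (a * c) := by
    intro a c; rw [← zpow_natCast (ρ ^ a), ← zpow_mul]
  -- choose n with m ∣ D*n + t
  haveI : NeZero m := ⟨hm0⟩
  obtain ⟨n, hnm, hn⟩ : ∃ n : ℕ, n < m ∧ (m : ℤ) ∣ (D * n + t) := by
    have hu : IsUnit ((d : ZMod m)) := (ZMod.isUnit_iff_coprime d m).2 hdm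
    refine ⟨((- t : ZMod m) * (d : ZMod m)⁻¹).val, ZMod.val_lt _, ?_⟩
    rw [← ZMod.intCast_zmod_eq_zero_iff_dvd, hD]
    push_cast
    rw [ZMod.natCast_val, ZMod.cast_id]
    rw [show (d : ZMod m) * (-(t : ZMod m) * (d : ZMod m)⁻¹)
        = -(t : ZMod m) * ((d : ZMod m) * (d : ZMod m)⁻¹) from by ring,
      ZMod.mul_inv_of_unit _ hu]
    ring
  -- basic divisibility cancellation
  have hdvd_cancel : ∀ w : ℤ, (m : ℤ) ∣ D * w → 0 < w → w < m → False := by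
    intro w hw h0 hwm
    have hcop : IsCoprime (m : ℤ) (d : ℤ) := by
      rw [Int.isCoprime_iff_gcd_eq_one]
      exact_mod_cast hdm.symm
    have h2 : (m : ℤ) ∣ w := hcop.dvd_of_dvd_mul_left hw
    have := Int.le_of_dvd h0 h2
    omega
  -- nonvanishing of denominators (and of needed numerators)
  have hfactor : ∀ (x : Ω) (i : ℕ), 1 - x * (ρ ^ D) ^ i = 1 - x * ρ ^ (D * i) := by
    intro x i; rw [hfuse]
  have hW1 : ∀ l, l ≤ n → qPoch (ρ ^ D) (ρ ^ D) l ≠ 0 := by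
    intro l hl
    unfold qPoch
    rw [Finset.prod_ne_zero_iff]
    intro i hi
    simp only [Finset.mem_range] at hi
    rw [hfactor, sub_ne_zero]
    intro h1
    rw [show ρ ^ D * ρ ^ (D * i) = ρ ^ (D * (i + 1)) from by
      rw [← zpow_add₀ hρ0]; congr 1; push_cast; ring] at h1
    refine hdvd_cancel ((i : ℤ) + 1) ((hzone _).1 (by exact_mod_cast h1.symm)) (by omega) ?_
    have : (i : ℤ) < (l : ℤ) := by exact_mod_cast hi
    have : (l : ℤ) ≤ (n : ℤ) := by exact_mod_cast hl
    have : (n : ℤ) < (m : ℤ) := by exact_mod_cast hnm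
    omega
  have hU1 : ∀ l, l ≤ n → qPoch (ρ ^ t) (ρ ^ D) l ≠ 0 := by
    intro l hl
    unfold qPoch
    rw [Finset.prod_ne_zero_iff]
    intro i hi
    simp only [Finset.mem_range] at hi
    rw [hfactor, sub_ne_zero]
    intro h1
    have h2 : ρ ^ (t + D * i) = 1 := by
      rw [zpow_add₀ hρ0, ← h1]
    have h3 : (m : ℤ) ∣ (t + D * i) := (hzone _).1 h2
    have h4 : (m : ℤ) ∣ D * ((n : ℤ) - i) := by
      have : D * ((n : ℤ) - i) = (D * n + t) - (t + D * i) := by ring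
      rw [this]
      exact dvd_sub hn h3
    exact hdvd_cancel _ h4 (by omega) (by omega)
  have hW2 : ∀ l : ℕ, qPoch (α * ρ ^ D) (ρ ^ D) l ≠ 0 := by
    intro l
    unfold qPoch
    rw [Finset.prod_ne_zero_iff]
    intro i hi
    rw [hfactor, sub_ne_zero]
    intro h1
    exact hα1 (D + D * i) (by rw [zpow_add₀ hρ0]; linear_combination -h1)
  have hU2 : ∀ l : ℕ, qPoch (α * ρ ^ t) (ρ ^ D) l ≠ 0 := by
    intro l
    unfold qPoch
    rw [Finset.prod_ne_zero_iff]
    intro i hi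
    rw [hfactor, sub_ne_zero]
    intro h1
    exact hα1 (t + D * i) (by rw [zpow_add₀ hρ0]; linear_combination -h1)
  have hW3 : ∀ l : ℕ, qPoch (ρ ^ D / α) (ρ ^ D) l ≠ 0 := by
    intro l
    unfold qPoch
    rw [Finset.prod_ne_zero_iff]
    intro i hi
    rw [hfactor, sub_ne_zero]
    intro h1
    refine hα2 (D + D * i) ?_
    rw [zpow_add₀ hρ0]
    have h2 : ρ ^ D * ρ ^ (D * (i:ℤ)) = α := by
      field_simp at h1
      linear_combination -h1
    exact h2
  have hU3 : ∀ l : ℕ, qPoch (ρ ^ t / α) (ρ ^ D) l ≠ 0 := by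
    intro l
    unfold qPoch
    rw [Finset.prod_ne_zero_iff]
    intro i hi
    rw [hfactor, sub_ne_zero]
    intro h1
    refine hα2 (t + D * i) ?_
    rw [zpow_add₀ hρ0]
    have h2 : ρ ^ t * ρ ^ (D * (i:ℤ)) = α := by
      field_simp at h1
      linear_combination -h1
    exact h2
  -- terms beyond n vanish
  have hvanish : ∀ k, n < k → T k = 0 := by
    intro k hkn
    have hz : qPoch (ρ ^ t) (ρ ^ D) k = 0 := by
      unfold qPoch
      apply Finset.prod_eq_zero (Finset.mem_range.2 hkn)
      rw [hfactor, sub_eq_zero]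
      rw [show ρ ^ t * ρ ^ (D * n) = ρ ^ (D * n + t) from by rw [← zpow_add₀ hρ0]; congr 1; ring]
      exact ((hzone _).2 hn).symm
    simp only [hT]
    rw [hz]
    ring
  have hsum1 : ∑ k ∈ Finset.range m, T k = ∑ k ∈ Finset.range (n + 1), T k := by
    refine (Finset.sum_subset (Finset.range_subset_range.2 (by omega)) ?_).symm
    intro x hx hnx
    simp only [Finset.mem_range] at hx hnx
    exact hvanish x (by omega)
  -- pairing
  have hpair : ∀ k, k ≤ n → T (n - k) = - T k := by
    intro k hk
    set e : ℤ := ∑ j ∈ Finset.range k, ((n : ℤ) - 1 - j) with he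
    set en : ℤ := ∑ j ∈ Finset.range n, ((n : ℤ) - 1 - j) with hen_def
    -- base rewrites
    have hb1 : (ρ ^ t)⁻¹ * ρ ^ (D * (1 - (n : ℤ))) = ρ ^ D := by
      rw [← zpow_neg, ← zpow_add₀ hρ0]
      exact hshift _ _ (by rw [show -t + D * (1 - (n : ℤ)) - D = -(D * n + t) from by ring]; exact dvd_neg.2 hn)
    have hb4 : (ρ ^ D)⁻¹ * ρ ^ (D * (1 - (n : ℤ))) = ρ ^ t := by
      rw [← zpow_neg, ← zpow_add₀ hρ0]
      exact hshift _ _ (by rw [show -D + D * (1 - (n : ℤ)) - t = -(D * n + t) from by ring]; exact dvd_neg.2 hn)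
    have hb2 : (α * ρ ^ t)⁻¹ * ρ ^ (D * (1 - (n : ℤ))) = ρ ^ D / α := by
      rw [mul_inv]
      calc α⁻¹ * (ρ ^ t)⁻¹ * ρ ^ (D * (1 - (n : ℤ)))
          = α⁻¹ * ((ρ ^ t)⁻¹ * ρ ^ (D * (1 - (n : ℤ)))) := by ring
        _ = α⁻¹ * ρ ^ D := by rw [hb1]
        _ = ρ ^ D / α := by rw [div_eq_mul_inv]; ring
    have hb5 : (α * ρ ^ D)⁻¹ * ρ ^ (D * (1 - (n : ℤ))) = ρ ^ t / α := by
      rw [mul_inv]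
      calc α⁻¹ * (ρ ^ D)⁻¹ * ρ ^ (D * (1 - (n : ℤ)))
          = α⁻¹ * ((ρ ^ D)⁻¹ * ρ ^ (D * (1 - (n : ℤ)))) := by ring
        _ = α⁻¹ * ρ ^ t := by rw [hb4]
        _ = ρ ^ t / α := by rw [div_eq_mul_inv]; ring
    have hb3 : (ρ ^ t / α)⁻¹ * ρ ^ (D * (1 - (n : ℤ))) = α * ρ ^ D := by
      rw [div_eq_mul_inv, mul_inv, inv_inv]
      calc (ρ ^ t)⁻¹ * α * ρ ^ (D * (1 - (n : ℤ)))
          = α * ((ρ ^ t)⁻¹ * ρ ^ (D * (1 - (n : ℤ)))) := by ring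
        _ = α * ρ ^ D := by rw [hb1]
    have hb6 : (ρ ^ D / α)⁻¹ * ρ ^ (D * (1 - (n : ℤ))) = α * ρ ^ t := by
      rw [div_eq_mul_inv, mul_inv, inv_inv]
      calc (ρ ^ D)⁻¹ * α * ρ ^ (D * (1 - (n : ℤ)))
          = α * ((ρ ^ D)⁻¹ * ρ ^ (D * (1 - (n : ℤ)))) := by ring
        _ = α * ρ ^ t := by rw [hb4]
    -- nonzero bases
    have hxt : ρ ^ t ≠ 0 := zpow_ne_zero _ hρ0
    have hxD : ρ ^ D ≠ 0 := zpow_ne_zero _ hρ0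
    -- the six reversal identities
    have g1 : qPoch (ρ ^ t) (ρ ^ D) n = qPoch (ρ ^ t) (ρ ^ D) (n - k)
        * ((-1) ^ k * (ρ ^ t) ^ k * ρ ^ (D * e)) * qPoch (ρ ^ D) (ρ ^ D) k := by
      have := rev_lemma ρ hρ0 D n (ρ ^ t) hxt k hk
      rwa [hb1] at this
    have g2 : qPoch (α * ρ ^ t) (ρ ^ D) n = qPoch (α * ρ ^ t) (ρ ^ D) (n - k)
        * ((-1) ^ k * (α * ρ ^ t) ^ k * ρ ^ (D * e)) * qPoch (ρ ^ D / α) (ρ ^ D) k := by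
      have := rev_lemma ρ hρ0 D n (α * ρ ^ t) (mul_ne_zero hα0 hxt) k hk
      rwa [hb2] at this
    have g3 : qPoch (ρ ^ t / α) (ρ ^ D) n = qPoch (ρ ^ t / α) (ρ ^ D) (n - k)
        * ((-1) ^ k * (ρ ^ t / α) ^ k * ρ ^ (D * e)) * qPoch (α * ρ ^ D) (ρ ^ D) k := by
      have := rev_lemma ρ hρ0 D n (ρ ^ t / α) (div_ne_zero hxt hα0) k hk
      rwa [hb3] at this
    have g4 : qPoch (ρ ^ D) (ρ ^ D) n = qPoch (ρ ^ D) (ρ ^ D) (n - k)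
        * ((-1) ^ k * (ρ ^ D) ^ k * ρ ^ (D * e)) * qPoch (ρ ^ t) (ρ ^ D) k := by
      have := rev_lemma ρ hρ0 D n (ρ ^ D) hxD k hk
      rwa [hb4] at this
    have g5 : qPoch (α * ρ ^ D) (ρ ^ D) n = qPoch (α * ρ ^ D) (ρ ^ D) (n - k)
        * ((-1) ^ k * (α * ρ ^ D) ^ k * ρ ^ (D * e)) * qPoch (ρ ^ t / α) (ρ ^ D) k := by
      have := rev_lemma ρ hρ0 D n (α * ρ ^ D) (mul_ne_zero hα0 hxD) k hk
      rwa [hb5] at this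
    have g6 : qPoch (ρ ^ D / α) (ρ ^ D) n = qPoch (ρ ^ D / α) (ρ ^ D) (n - k)
        * ((-1) ^ k * (ρ ^ D / α) ^ k * ρ ^ (D * e)) * qPoch (α * ρ ^ t) (ρ ^ D) k := by
      have := rev_lemma ρ hρ0 D n (ρ ^ D / α) (div_ne_zero hxD hα0) k hk
      rwa [hb6] at this
    -- HU and HW via assemble
    have HU : qPoch (ρ ^ t) (ρ ^ D) (n - k) ^ 2 * qPoch (α * ρ ^ t) (ρ ^ D) (n - k)
        * qPoch (ρ ^ t / α) (ρ ^ D) (n - k) * ((ρ ^ t) ^ (4 * k) * (ρ ^ (D * e)) ^ 4)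
        * (qPoch (ρ ^ D) (ρ ^ D) k ^ 2 * qPoch (ρ ^ D / α) (ρ ^ D) k
          * qPoch (α * ρ ^ D) (ρ ^ D) k)
        = qPoch (ρ ^ t) (ρ ^ D) n ^ 2 * qPoch (α * ρ ^ t) (ρ ^ D) n
          * qPoch (ρ ^ t / α) (ρ ^ D) n :=
      assemble k _ _ _ _ _ _ _ _ _ (ρ ^ t) α (ρ ^ (D * e)) hα0 g1 g2 g3
    have HW : qPoch (ρ ^ D) (ρ ^ D) (n - k) ^ 2 * qPoch (α * ρ ^ D) (ρ ^ D) (n - k)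
        * qPoch (ρ ^ D / α) (ρ ^ D) (n - k) * ((ρ ^ D) ^ (4 * k) * (ρ ^ (D * e)) ^ 4)
        * (qPoch (ρ ^ t) (ρ ^ D) k ^ 2 * qPoch (ρ ^ t / α) (ρ ^ D) k
          * qPoch (α * ρ ^ t) (ρ ^ D) k)
        = qPoch (ρ ^ D) (ρ ^ D) n ^ 2 * qPoch (α * ρ ^ D) (ρ ^ D) n
          * qPoch (ρ ^ D / α) (ρ ^ D) n :=
      assemble k _ _ _ _ _ _ _ _ _ (ρ ^ D) α (ρ ^ (D * e)) hα0 g4 g5 g6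
    -- full reversal (k := n)
    have g1n : qPoch (ρ ^ t) (ρ ^ D) n = 1
        * ((-1) ^ n * (ρ ^ t) ^ n * ρ ^ (D * en)) * qPoch (ρ ^ D) (ρ ^ D) n := by
      have h := rev_lemma ρ hρ0 D n (ρ ^ t) hxt n le_rfl
      rw [hb1, Nat.sub_self, ← hen_def] at h
      rw [h, show qPoch (ρ ^ t) (ρ ^ D) 0 = 1 from Finset.prod_range_zero _]
    have g2n : qPoch (α * ρ ^ t) (ρ ^ D) n = 1
        * ((-1) ^ n * (α * ρ ^ t) ^ n * ρ ^ (D * en)) * qPoch (ρ ^ D / α) (ρ ^ D) n := by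
      have h := rev_lemma ρ hρ0 D n (α * ρ ^ t) (mul_ne_zero hα0 hxt) n le_rfl
      rw [hb2, Nat.sub_self, ← hen_def] at h
      rw [h, show qPoch (α * ρ ^ t) (ρ ^ D) 0 = 1 from Finset.prod_range_zero _]
    have g3n : qPoch (ρ ^ t / α) (ρ ^ D) n = 1
        * ((-1) ^ n * (ρ ^ t / α) ^ n * ρ ^ (D * en)) * qPoch (α * ρ ^ D) (ρ ^ D) n := by
      have h := rev_lemma ρ hρ0 D n (ρ ^ t / α) (div_ne_zero hxt hα0) n le_rfl
      rw [hb3, Nat.sub_self, ← hen_def] at h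
      rw [h, show qPoch (ρ ^ t / α) (ρ ^ D) 0 = 1 from Finset.prod_range_zero _]
    have HR : 1 ^ 2 * 1 * 1 * ((ρ ^ t) ^ (4 * n) * (ρ ^ (D * en)) ^ 4)
        * (qPoch (ρ ^ D) (ρ ^ D) n ^ 2 * qPoch (ρ ^ D / α) (ρ ^ D) n
          * qPoch (α * ρ ^ D) (ρ ^ D) n)
        = qPoch (ρ ^ t) (ρ ^ D) n ^ 2 * qPoch (α * ρ ^ t) (ρ ^ D) n
          * qPoch (ρ ^ t / α) (ρ ^ D) n :=
      assemble n _ _ _ _ _ _ _ _ _ (ρ ^ t) α (ρ ^ (D * en)) hα0 g1n g2n g3n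
    -- qInt flip
    have HQ : qInt ρ (2 * D * ((n : ℤ) - k) + t)
        = -ρ ^ (D * (n : ℤ) - 2 * D * k) * qInt ρ (2 * D * k + t) := by
      unfold qInt
      rw [show -ρ ^ (D * (n : ℤ) - 2 * D * k) * ((1 - ρ ^ (2 * D * k + t)) / (1 - ρ))
        = (-ρ ^ (D * (n : ℤ) - 2 * D * k) * (1 - ρ ^ (2 * D * k + t))) / (1 - ρ) from by ring]
      congr 1
      have e1 : ρ ^ (2 * D * ((n : ℤ) - k) + t) = ρ ^ (D * (n : ℤ) - 2 * D * k) := by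
        apply hshift
        rw [show 2 * D * ((n : ℤ) - k) + t - (D * (n : ℤ) - 2 * D * k) = D * n + t from by ring]
        exact hn
      have e2 : ρ ^ (-(D * (n : ℤ) - 2 * D * k)) = ρ ^ (2 * D * k + t) := by
        apply hshift
        rw [show -(D * (n : ℤ) - 2 * D * k) - (2 * D * k + t) = -(D * n + t) from by ring]
        exact dvd_neg.2 hn
      rw [e1]
      calc 1 - ρ ^ (D * (n : ℤ) - 2 * D * k)
          = (-1) * 1 * ρ ^ (D * (n : ℤ) - 2 * D * k)
            * (1 - 1⁻¹ * ρ ^ (-(D * (n : ℤ) - 2 * D * k))) := by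
            rw [← flip_factor ρ 1 hρ0 one_ne_zero]; rw [one_mul]
        _ = -ρ ^ (D * (n : ℤ) - 2 * D * k) * (1 - ρ ^ (2 * D * k + t)) := by
            rw [e2]; ring
    -- Gauss sum for en
    have hen : 2 * en = (n : ℤ) * ((n : ℤ) - 1) := by
      have h1 : en = (n : ℤ) * ((n : ℤ) - 1) - ∑ j ∈ Finset.range n, (j : ℤ) := by
        rw [hen_def, Finset.sum_sub_distrib, Finset.sum_const, Finset.card_range, nsmul_eq_mul]
      rw [h1]
      linarith [gauss_int n]
    -- the rho-power identity
    have hM : ρ ^ (D * (n : ℤ) - 2 * D * k) * ρ ^ ((D - 2 * t) * ((n : ℤ) - k))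
        * (ρ ^ D) ^ (4 * k) * (ρ ^ (D * e)) ^ 4 * (ρ ^ t) ^ (4 * n) * (ρ ^ (D * en)) ^ 4
        = ρ ^ ((D - 2 * t) * k) * (ρ ^ t) ^ (4 * k) * (ρ ^ (D * e)) ^ 4 := by
      simp only [hfuse, ← zpow_add₀ hρ0]
      apply hshift
      obtain ⟨c, hc⟩ := hn
      refine ⟨2 * n * c, ?_⟩
      push_cast
      linear_combination (2 * (n : ℤ)) * hc + (2 * D) * hen
    -- cast clean-up
    have hcast : ((n - k : ℕ) : ℤ) = (n : ℤ) - k := by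
      push_cast [hk]; ring
    -- nonvanishing of the two denominators
    have hWnk : qPoch (ρ ^ D) (ρ ^ D) (n - k) ^ 2 * qPoch (α * ρ ^ D) (ρ ^ D) (n - k)
        * qPoch (ρ ^ D / α) (ρ ^ D) (n - k) ≠ 0 :=
      mul_ne_zero (mul_ne_zero (pow_ne_zero _ (hW1 _ (by omega))) (hW2 _)) (hW3 _)
    have hWk : qPoch (ρ ^ D) (ρ ^ D) k ^ 2 * qPoch (α * ρ ^ D) (ρ ^ D) k
        * qPoch (ρ ^ D / α) (ρ ^ D) k ≠ 0 :=
      mul_ne_zero (mul_ne_zero (pow_ne_zero _ (hW1 _ hk)) (hW2 _)) (hW3 _)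
    -- now the main computation
    simp only [hT]
    rw [hcast]
    rw [show ∀ (a b c p : Ω), a * b / c * p = (a * b * p) / c from fun a b c p => by ring,
      show ∀ (a b c p : Ω), -(a * b / c * p) = (-(a * b * p)) / c from fun a b c p => by ring]
    rw [div_eq_div_iff hWnk hWk]
    set Z : Ω := (ρ ^ t) ^ (4 * k) * (ρ ^ (D * e)) ^ 4 * ((ρ ^ D) ^ (4 * k) * (ρ ^ (D * e)) ^ 4)
      with hZ
    have hZ0 : Z ≠ 0 := by
      apply mul_ne_zero
      · exact mul_ne_zero (pow_ne_zero _ hxt) (pow_ne_zero _ (zpow_ne_zero _ hρ0))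
      · exact mul_ne_zero (pow_ne_zero _ hxD) (pow_ne_zero _ (zpow_ne_zero _ hρ0))
    apply mul_right_cancel₀ hZ0
    rw [hZ]
    calc qInt ρ (2 * D * ((n:ℤ) - k) + t)
          * (qPoch (ρ ^ t) (ρ ^ D) (n - k) ^ 2 * qPoch (α * ρ ^ t) (ρ ^ D) (n - k)
            * qPoch (ρ ^ t / α) (ρ ^ D) (n - k))
          * ρ ^ ((D - 2 * t) * ((n:ℤ) - k))
          * (qPoch (ρ ^ D) (ρ ^ D) k ^ 2 * qPoch (α * ρ ^ D) (ρ ^ D) k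
            * qPoch (ρ ^ D / α) (ρ ^ D) k)
          * ((ρ ^ t) ^ (4 * k) * (ρ ^ (D * e)) ^ 4 * ((ρ ^ D) ^ (4 * k) * (ρ ^ (D * e)) ^ 4))
        = (qInt ρ (2 * D * ((n:ℤ) - k) + t) * ρ ^ ((D - 2 * t) * ((n:ℤ) - k))
            * ((ρ ^ D) ^ (4 * k) * (ρ ^ (D * e)) ^ 4))
          * (qPoch (ρ ^ t) (ρ ^ D) (n - k) ^ 2 * qPoch (α * ρ ^ t) (ρ ^ D) (n - k)
            * qPoch (ρ ^ t / α) (ρ ^ D) (n - k) * ((ρ ^ t) ^ (4 * k) * (ρ ^ (D * e)) ^ 4)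
            * (qPoch (ρ ^ D) (ρ ^ D) k ^ 2 * qPoch (ρ ^ D / α) (ρ ^ D) k
              * qPoch (α * ρ ^ D) (ρ ^ D) k)) := by ring
      _ = (qInt ρ (2 * D * ((n:ℤ) - k) + t) * ρ ^ ((D - 2 * t) * ((n:ℤ) - k))
            * ((ρ ^ D) ^ (4 * k) * (ρ ^ (D * e)) ^ 4))
          * (qPoch (ρ ^ t) (ρ ^ D) n ^ 2 * qPoch (α * ρ ^ t) (ρ ^ D) n
            * qPoch (ρ ^ t / α) (ρ ^ D) n) := by rw [HU]
      _ = (qInt ρ (2 * D * ((n:ℤ) - k) + t) * ρ ^ ((D - 2 * t) * ((n:ℤ) - k))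
            * ((ρ ^ D) ^ (4 * k) * (ρ ^ (D * e)) ^ 4))
          * (1 ^ 2 * 1 * 1 * ((ρ ^ t) ^ (4 * n) * (ρ ^ (D * en)) ^ 4)
            * (qPoch (ρ ^ D) (ρ ^ D) n ^ 2 * qPoch (ρ ^ D / α) (ρ ^ D) n
              * qPoch (α * ρ ^ D) (ρ ^ D) n)) := by rw [HR]
      _ = (-ρ ^ (D * (n : ℤ) - 2 * D * k) * qInt ρ (2 * D * k + t)
            * ρ ^ ((D - 2 * t) * ((n:ℤ) - k))
            * ((ρ ^ D) ^ (4 * k) * (ρ ^ (D * e)) ^ 4))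
          * (1 ^ 2 * 1 * 1 * ((ρ ^ t) ^ (4 * n) * (ρ ^ (D * en)) ^ 4)
            * (qPoch (ρ ^ D) (ρ ^ D) n ^ 2 * qPoch (ρ ^ D / α) (ρ ^ D) n
              * qPoch (α * ρ ^ D) (ρ ^ D) n)) := by rw [HQ]
      _ = ((-1) * qInt ρ (2 * D * k + t)
            * (qPoch (ρ ^ D) (ρ ^ D) n ^ 2 * qPoch (ρ ^ D / α) (ρ ^ D) n
              * qPoch (α * ρ ^ D) (ρ ^ D) n))
          * (ρ ^ (D * (n : ℤ) - 2 * D * k) * ρ ^ ((D - 2 * t) * ((n:ℤ) - k))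
            * (ρ ^ D) ^ (4 * k) * (ρ ^ (D * e)) ^ 4 * (ρ ^ t) ^ (4 * n)
            * (ρ ^ (D * en)) ^ 4) := by ring
      _ = ((-1) * qInt ρ (2 * D * k + t)
            * (qPoch (ρ ^ D) (ρ ^ D) n ^ 2 * qPoch (ρ ^ D / α) (ρ ^ D) n
              * qPoch (α * ρ ^ D) (ρ ^ D) n))
          * (ρ ^ ((D - 2 * t) * k) * (ρ ^ t) ^ (4 * k) * (ρ ^ (D * e)) ^ 4) := by rw [hM]
      _ = ((-1) * qInt ρ (2 * D * k + t)
            * (ρ ^ ((D - 2 * t) * k) * (ρ ^ t) ^ (4 * k) * (ρ ^ (D * e)) ^ 4))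
          * (qPoch (ρ ^ D) (ρ ^ D) n ^ 2 * qPoch (α * ρ ^ D) (ρ ^ D) n
            * qPoch (ρ ^ D / α) (ρ ^ D) n) := by ring
      _ = ((-1) * qInt ρ (2 * D * k + t)
            * (ρ ^ ((D - 2 * t) * k) * (ρ ^ t) ^ (4 * k) * (ρ ^ (D * e)) ^ 4))
          * (qPoch (ρ ^ D) (ρ ^ D) (n - k) ^ 2 * qPoch (α * ρ ^ D) (ρ ^ D) (n - k)
            * qPoch (ρ ^ D / α) (ρ ^ D) (n - k) * ((ρ ^ D) ^ (4 * k) * (ρ ^ (D * e)) ^ 4)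
            * (qPoch (ρ ^ t) (ρ ^ D) k ^ 2 * qPoch (ρ ^ t / α) (ρ ^ D) k
              * qPoch (α * ρ ^ t) (ρ ^ D) k)) := by rw [HW]
      _ = -(qInt ρ (2 * D * k + t)
            * (qPoch (ρ ^ t) (ρ ^ D) k ^ 2 * qPoch (α * ρ ^ t) (ρ ^ D) k
              * qPoch (ρ ^ t / α) (ρ ^ D) k) * ρ ^ ((D - 2 * t) * k))
          * (qPoch (ρ ^ D) (ρ ^ D) (n - k) ^ 2 * qPoch (α * ρ ^ D) (ρ ^ D) (n - k)
            * qPoch (ρ ^ D / α) (ρ ^ D) (n - k))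
          * ((ρ ^ t) ^ (4 * k) * (ρ ^ (D * e)) ^ 4 * ((ρ ^ D) ^ (4 * k)
            * (ρ ^ (D * e)) ^ 4)) := by ring
  -- conclude
  have hrefl : ∑ k ∈ Finset.range (n + 1), T k = ∑ k ∈ Finset.range (n + 1), T (n - k) := by
    rw [← Finset.sum_range_reflect (fun j => T (n - j)) (n + 1)]
    apply Finset.sum_congr rfl
    intro j hj
    simp only [Finset.mem_range] at hj
    congr 1
    omega
  have hzero : ∑ k ∈ Finset.range (n + 1), T k + ∑ k ∈ Finset.range (n + 1), T k = 0 := by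
    nth_rewrite 2 [hrefl]
    rw [← Finset.sum_add_distrib]
    apply Finset.sum_eq_zero
    intro k hkmem
    simp only [Finset.mem_range] at hkmem
    rw [hpair k (by omega)]
    ring
  rw [hsum1]
  have h2 : (2 : Ω) * (∑ k ∈ Finset.range (n + 1), T k) = 0 := by
    rw [two_mul]; exact hzero
  have := mul_eq_zero.1 h2
  rcases this with h | h
  · exact absurd h two_ne_zero
  · exact h

end Key

namespace Lemma2Aux

noncomputable abbrev FF := RatFunc ℚ
noncomputable abbrev RR := Polynomial FF
noncomputable abbrev LL := RatFunc FF
noncomputable abbrev OM := AlgebraicClosure FF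

instance : CharZero FF :=
  charZero_of_injective_algebraMap (IsFractionRing.injective (Polynomial ℚ) FF)
instance : CharZero OM := charZero_of_injective_algebraMap (algebraMap FF OM).injective

noncomputable def emb : RR →+* LL := algebraMap RR LL

lemma emb_injective : Function.Injective (algebraMap RR LL) := IsFractionRing.injective RR LL

/-- Workhorse coprimality criterion. -/
lemma coprime_of_roots (f g : RR)
    (h : ∀ ρ : OM, aeval ρ f = 0 → aeval ρ g ≠ 0) : IsCoprime f g := by
  classical
  rw [← EuclideanDomain.gcd_isUnit_iff]
  by_contra hng
  have hpf : EuclideanDomain.gcd f g ∣ f := EuclideanDomain.gcd_dvd_left f g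
  have hpg : EuclideanDomain.gcd f g ∣ g := EuclideanDomain.gcd_dvd_right f g
  set p := EuclideanDomain.gcd f g with hp
  by_cases hp0 : p = 0
  · have hf0 : f = 0 := by
      obtain ⟨c, hc⟩ := hpf; rw [hc, hp0, zero_mul]
    have hg0 : g = 0 := by
      obtain ⟨c, hc⟩ := hpg; rw [hc, hp0, zero_mul]
    exact h 0 (by simp [hf0]) (by simp [hg0])
  · have hdeg : (p.map (algebraMap FF OM)).degree ≠ 0 := by
      rw [degree_map]
      intro hd
      exact hng (Polynomial.isUnit_iff_degree_eq_zero.2 hd)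
    obtain ⟨ρ, hρ⟩ := IsAlgClosed.exists_root _ hdeg
    have hev : aeval ρ p = 0 := by rw [aeval_def, ← Polynomial.eval_map]; exact hρ
    have hf : aeval ρ f = 0 := by
      obtain ⟨c, hc⟩ := hpf; rw [hc, map_mul, hev, zero_mul]
    have hg : aeval ρ g = 0 := by
      obtain ⟨c, hc⟩ := hpg; rw [hc, map_mul, hev, zero_mul]
    exact h ρ hf hg

variable (m : ℕ)

/-- `x ∈ ℚ(a)(q)` is "M-integral with value function v at the roots of Φₘ". -/
def Rep (x : LL) (v : OM → OM) : Prop :=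
  ∃ f g : RR, IsCoprime (cyclotomic m FF) g ∧
    x * algebraMap RR LL g = algebraMap RR LL f ∧
    ∀ ρ : OM, aeval ρ (cyclotomic m FF) = 0 → aeval ρ f = v ρ * aeval ρ g

/-- Units version: numerator also coprime to Φₘ. -/
def RepU (x : LL) (v : OM → OM) : Prop :=
  ∃ f g : RR, IsCoprime (cyclotomic m FF) f ∧ IsCoprime (cyclotomic m FF) g ∧
    x * algebraMap RR LL g = algebraMap RR LL f ∧
    ∀ ρ : OM, aeval ρ (cyclotomic m FF) = 0 → aeval ρ f = v ρ * aeval ρ g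

variable {m}

lemma cyclotomic_not_unit (hm : 1 < m) : ¬ IsUnit (cyclotomic m FF) := by
  intro h
  have := Polynomial.degree_cyclotomic_pos m FF (by omega)
  rw [Polynomial.isUnit_iff_degree_eq_zero.1 h] at this
  exact lt_irrefl _ this

lemma aeval_ne_of_coprime {g : RR} (h : IsCoprime (cyclotomic m FF) g) {ρ : OM}
    (hρ : aeval ρ (cyclotomic m FF) = 0) : aeval ρ g ≠ 0 := by
  obtain ⟨u, v, huv⟩ := h
  intro h0
  have := congrArg (aeval ρ) huv
  rw [map_add, map_mul, map_mul, map_one, hρ, h0, mul_zero, mul_zero, add_zero] at this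
  exact zero_ne_one this

lemma RepU.toRep {x v} (h : RepU m x v) : Rep m x v := by
  obtain ⟨f, g, _, hg, hxg, hv⟩ := h
  exact ⟨f, g, hg, hxg, hv⟩

lemma Rep.congrV {x v w} (h : Rep m x v) (hvw : ∀ ρ, v ρ = w ρ) : Rep m x w := by
  obtain ⟨f, g, hg, hxg, hv⟩ := h
  exact ⟨f, g, hg, hxg, fun ρ hρ => by rw [← hvw ρ]; exact hv ρ hρ⟩

lemma RepU.congrV {x v w} (h : RepU m x v) (hvw : ∀ ρ, v ρ = w ρ) : RepU m x w := by
  obtain ⟨f, g, hf, hg, hxg, hv⟩ := h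
  exact ⟨f, g, hf, hg, hxg, fun ρ hρ => by rw [← hvw ρ]; exact hv ρ hρ⟩

lemma rep_zero : Rep m 0 (fun _ => 0) :=
  ⟨0, 1, isCoprime_one_right, by simp, by simp⟩

lemma repU_one : RepU m 1 (fun _ => 1) :=
  ⟨1, 1, isCoprime_one_right, isCoprime_one_right, by simp, by simp⟩

lemma rep_one : Rep m 1 (fun _ => 1) := repU_one.toRep

lemma Rep.add {x y v w} (hx : Rep m x v) (hy : Rep m y w) :
    Rep m (x + y) (fun ρ => v ρ + w ρ) := by
  obtain ⟨f, g, hg, hxg, hv⟩ := hx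
  obtain ⟨f', g', hg', hyg, hw⟩ := hy
  refine ⟨f * g' + f' * g, g * g', hg.mul_right hg', ?_, ?_⟩
  · rw [map_add, map_mul, map_mul, map_mul]
    linear_combination (algebraMap RR LL g') * hxg + (algebraMap RR LL g) * hyg
  · intro ρ hρ
    rw [map_add, map_mul, map_mul, map_mul, hv ρ hρ, hw ρ hρ]
    ring

lemma Rep.mul {x y v w} (hx : Rep m x v) (hy : Rep m y w) :
    Rep m (x * y) (fun ρ => v ρ * w ρ) := by
  obtain ⟨f, g, hg, hxg, hv⟩ := hx
  obtain ⟨f', g', hg', hyg, hw⟩ := hy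
  refine ⟨f * f', g * g', hg.mul_right hg', ?_, ?_⟩
  · rw [map_mul, map_mul]
    linear_combination (y * algebraMap RR LL g') * hxg + (algebraMap RR LL f) * hyg
  · intro ρ hρ
    rw [map_mul, map_mul, hv ρ hρ, hw ρ hρ]
    ring

lemma RepU.mul {x y v w} (hx : RepU m x v) (hy : RepU m y w) :
    RepU m (x * y) (fun ρ => v ρ * w ρ) := by
  obtain ⟨f, g, hf, hg, hxg, hv⟩ := hx
  obtain ⟨f', g', hf', hg', hyg, hw⟩ := hy
  refine ⟨f * f', g * g', hf.mul_right hf', hg.mul_right hg', ?_, ?_⟩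
  · rw [map_mul, map_mul]
    linear_combination (y * algebraMap RR LL g') * hxg + (algebraMap RR LL f) * hyg
  · intro ρ hρ
    rw [map_mul, map_mul, hv ρ hρ, hw ρ hρ]
    ring

lemma Rep.sub {x y v w} (hx : Rep m x v) (hy : Rep m y w) :
    Rep m (x - y) (fun ρ => v ρ - w ρ) := by
  obtain ⟨f, g, hg, hxg, hv⟩ := hx
  obtain ⟨f', g', hg', hyg, hw⟩ := hy
  refine ⟨f * g' - f' * g, g * g', hg.mul_right hg', ?_, ?_⟩
  · rw [map_sub, map_mul, map_mul, map_mul]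
    linear_combination (algebraMap RR LL g') * hxg - (algebraMap RR LL g) * hyg
  · intro ρ hρ
    rw [map_sub, map_mul, map_mul, map_mul, hv ρ hρ, hw ρ hρ]
    ring

lemma Rep.pow {x v} (hx : Rep m x v) (c : ℕ) : Rep m (x ^ c) (fun ρ => v ρ ^ c) := by
  induction c with
  | zero => exact rep_one.congrV (fun ρ => by rw [pow_zero])
  | succ p ih =>
    rw [pow_succ]
    exact (ih.mul hx).congrV (fun ρ => (pow_succ _ _).symm)

lemma RepU.pow {x v} (hx : RepU m x v) (c : ℕ) : RepU m (x ^ c) (fun ρ => v ρ ^ c) := by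
  induction c with
  | zero => exact repU_one.congrV (fun ρ => by rw [pow_zero])
  | succ p ih =>
    rw [pow_succ]
    exact (ih.mul hx).congrV (fun ρ => (pow_succ _ _).symm)

lemma RepU.inv (hm : 1 < m) {x v} (hx : RepU m x v) :
    RepU m x⁻¹ (fun ρ => (v ρ)⁻¹) := by
  obtain ⟨f, g, hf, hg, hxg, hv⟩ := hx
  have hx0 : x ≠ 0 := by
    intro h0
    rw [h0, zero_mul] at hxg
    have hf0 : f = 0 := emb_injective (by rw [map_zero]; exact hxg.symm)
    rw [hf0] at hf
    exact cyclotomic_not_unit hm (isCoprime_zero_right.1 hf)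
  refine ⟨g, f, hg, hf, ?_, ?_⟩
  · field_simp
    linear_combination -hxg
  · intro ρ hρ
    have h1 := hv ρ hρ
    have h2 := aeval_ne_of_coprime hf hρ
    have h3 := aeval_ne_of_coprime hg hρ
    have hvρ : v ρ ≠ 0 := by
      intro h0; rw [h0, zero_mul] at h1; exact h2 h1
    field_simp
    linear_combination -h1

lemma RepU.div (hm : 1 < m) {x y v w} (hx : RepU m x v) (hy : RepU m y w) :
    RepU m (x / y) (fun ρ => v ρ / w ρ) := by
  rw [div_eq_mul_inv]
  exact (hx.mul (hy.inv hm)).congrV (fun ρ => (div_eq_mul_inv _ _).symm)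

lemma Rep.div (hm : 1 < m) {x y v w} (hx : Rep m x v) (hy : RepU m y w) :
    Rep m (x / y) (fun ρ => v ρ / w ρ) := by
  rw [div_eq_mul_inv]
  exact (hx.mul (hy.inv hm).toRep).congrV (fun ρ => (div_eq_mul_inv _ _).symm)

lemma rep_prod {ι : Type*} (s : Finset ι) (F : ι → LL) (V : ι → OM → OM)
    (h : ∀ i ∈ s, Rep m (F i) (V i)) :
    Rep m (∏ i ∈ s, F i) (fun ρ => ∏ i ∈ s, V i ρ) := by
  induction s using Finset.cons_induction with
  | empty => simpa using rep_one
  | cons a s ha ih =>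
    rw [Finset.prod_cons]
    exact (((h a (Finset.mem_cons_self a s)).mul
      (ih (fun i hi => h i (Finset.mem_cons_of_mem hi)))).congrV
      (fun ρ => (Finset.prod_cons ha).symm))

lemma repU_prod {ι : Type*} (s : Finset ι) (F : ι → LL) (V : ι → OM → OM)
    (h : ∀ i ∈ s, RepU m (F i) (V i)) :
    RepU m (∏ i ∈ s, F i) (fun ρ => ∏ i ∈ s, V i ρ) := by
  induction s using Finset.cons_induction with
  | empty => simpa using repU_one
  | cons a s ha ih =>
    rw [Finset.prod_cons]
    exact (((h a (Finset.mem_cons_self a s)).mul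
      (ih (fun i hi => h i (Finset.mem_cons_of_mem hi)))).congrV
      (fun ρ => (Finset.prod_cons ha).symm))

lemma rep_sum {ι : Type*} (s : Finset ι) (F : ι → LL) (V : ι → OM → OM)
    (h : ∀ i ∈ s, Rep m (F i) (V i)) :
    Rep m (∑ i ∈ s, F i) (fun ρ => ∑ i ∈ s, V i ρ) := by
  induction s using Finset.cons_induction with
  | empty => simpa using rep_zero
  | cons a s ha ih =>
    rw [Finset.sum_cons]
    exact (((h a (Finset.mem_cons_self a s)).add
      (ih (fun i hi => h i (Finset.mem_cons_of_mem hi)))).congrV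
      (fun ρ => (Finset.sum_cons ha).symm))

lemma Rep.one_sub {x v} (hx : Rep m x v) : Rep m (1 - x) (fun ρ => 1 - v ρ) :=
  rep_one.sub hx

lemma RepU.one_sub {x v} (hx : RepU m x v)
    (hne : ∀ ρ : OM, aeval ρ (cyclotomic m FF) = 0 → 1 - v ρ ≠ 0) :
    RepU m (1 - x) (fun ρ => 1 - v ρ) := by
  obtain ⟨f, g, hf, hg, hxg, hv⟩ := hx
  refine ⟨g - f, g, ?_, hg, ?_, ?_⟩
  · apply coprime_of_roots
    intro ρ hρ
    have h1 := hv ρ hρ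
    have h3 := aeval_ne_of_coprime hg hρ
    rw [map_sub, h1]
    intro h0
    exact hne ρ hρ (by
      have : (1 - v ρ) * aeval ρ g = 0 := by linear_combination h0
      rcases mul_eq_zero.1 this with h | h
      · exact h
      · exact absurd h h3)
  · rw [map_sub]
    linear_combination -hxg
  · intro ρ hρ
    rw [map_sub, hv ρ hρ]
    ring

-- roots of the cyclotomic are primitive roots
lemma root_prim (hm : 1 < m) {ρ : OM} (hρ : aeval ρ (cyclotomic m FF) = 0) :
    IsPrimitiveRoot ρ m := by
  haveI : NeZero (m : OM) := ⟨Nat.cast_ne_zero.2 (by omega)⟩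
  have h1 : IsRoot (cyclotomic m OM) ρ := by
    have : eval ρ (Polynomial.map (algebraMap FF OM) (cyclotomic m FF)) = 0 := by
      rw [Polynomial.eval_map, ← aeval_def]; exact hρ
    rwa [map_cyclotomic] at this
  exact (Polynomial.isRoot_cyclotomic_iff).1 h1

lemma root_ne_zero (hm : 1 < m) {ρ : OM} (hρ : aeval ρ (cyclotomic m FF) = 0) : ρ ≠ 0 := by
  intro h0
  have h1 := (root_prim hm hρ).pow_eq_one
  rw [h0, zero_pow (by omega)] at h1
  exact zero_ne_one h1

-- the transcendental element α
noncomputable def alf : OM := algebraMap FF OM (RatFunc.X)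

lemma alf_ne_zero : alf ≠ 0 := by
  intro h
  refine RatFunc.X_ne_zero ((algebraMap FF OM).injective ?_)
  rw [map_zero]
  exact h

lemma alf_pow_ne_one (c : ℕ) (hc : c ≠ 0) : alf ^ c ≠ 1 := by
  intro h
  have h1 : algebraMap FF OM ((RatFunc.X : FF) ^ c) = algebraMap FF OM 1 := by
    rw [map_pow, map_one]; exact h
  have h2 : (RatFunc.X : FF) ^ c = 1 := (algebraMap FF OM).injective h1
  rw [show (RatFunc.X : FF) = algebraMap (Polynomial ℚ) FF X from (RatFunc.algebraMap_X).symm]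
    at h2
  rw [← map_pow, show (1 : FF) = algebraMap (Polynomial ℚ) FF 1 from (map_one _).symm] at h2
  have h3 : (X : Polynomial ℚ) ^ c = 1 := IsFractionRing.injective (Polynomial ℚ) FF h2
  have h4 := congrArg natDegree h3
  rw [natDegree_X_pow, natDegree_one] at h4
  exact hc h4

lemma alf_cond1 (hm : 1 < m) {ρ : OM} (hρ : aeval ρ (cyclotomic m FF) = 0) :
    ∀ z : ℤ, alf * ρ ^ z ≠ 1 := by
  intro z h
  have hρ0 : ρ ≠ 0 := root_ne_zero hm hρ
  have h1 : (alf * ρ ^ z) ^ m = 1 := by rw [h, one_pow]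
  rw [mul_pow] at h1
  have h2 : (ρ ^ z) ^ m = 1 := by
    rw [← zpow_natCast (ρ ^ z), ← zpow_mul, mul_comm, zpow_mul, zpow_natCast,
      (root_prim hm hρ).pow_eq_one, one_zpow]
  rw [h2, mul_one] at h1
  exact alf_pow_ne_one m (by omega) h1

lemma alf_cond2 (hm : 1 < m) {ρ : OM} (hρ : aeval ρ (cyclotomic m FF) = 0) :
    ∀ z : ℤ, ρ ^ z ≠ alf := by
  intro z h
  have h2 : (ρ ^ z) ^ m = 1 := by
    rw [← zpow_natCast (ρ ^ z), ← zpow_mul, mul_comm, zpow_mul, zpow_natCast,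
      (root_prim hm hρ).pow_eq_one, one_zpow]
  rw [h] at h2
  exact alf_pow_ne_one m (by omega) h2

-- atoms
lemma repU_X (hm : 1 < m) : RepU m (RatFunc.X : LL) (fun ρ => ρ) := by
  refine ⟨X, 1, ?_, isCoprime_one_right, by rw [map_one, mul_one, RatFunc.algebraMap_X], ?_⟩
  · apply coprime_of_roots
    intro ρ hρ
    rw [show aeval ρ (X : RR) = ρ from by simp]
    exact root_ne_zero hm hρ
  · intro ρ hρ; simp

lemma repU_a : RepU m (RatFunc.C (RatFunc.X : FF)) (fun _ => alf) := by
  refine ⟨C (RatFunc.X : FF), 1, ?_, isCoprime_one_right,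
    by rw [map_one, mul_one, RatFunc.algebraMap_C], ?_⟩
  · apply coprime_of_roots
    intro ρ hρ
    rw [aeval_C]
    exact alf_ne_zero
  · intro ρ hρ; simp [alf]

lemma RepU.zpow {x v} (hm : 1 < m) (hx : RepU m x v) (z : ℤ) :
    RepU m (x ^ z) (fun ρ => v ρ ^ z) := by
  cases z with
  | ofNat c =>
    rw [Int.ofNat_eq_coe, zpow_natCast]
    exact (hx.pow c).congrV (fun ρ => (zpow_natCast _ _).symm)
  | negSucc c =>
    rw [zpow_negSucc]
    exact ((hx.pow (c + 1)).inv hm).congrV (fun ρ => (zpow_negSucc _ _).symm)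

-- qPoch representations
lemma rep_qPoch {x r : LL} {v w : OM → OM} (hx : Rep m x v) (hr : Rep m r w) (k : ℕ) :
    Rep m (qPoch x r k) (fun ρ => qPoch (v ρ) (w ρ) k) := by
  unfold qPoch
  exact rep_prod (Finset.range k) _ (fun i ρ => 1 - v ρ * w ρ ^ i)
    (fun i _ => (hx.mul (hr.pow i)).one_sub)

lemma repU_qPoch {x r : LL} {v w : OM → OM} (hx : RepU m x v) (hr : RepU m r w) (k : ℕ)
    (hne : ∀ (i : ℕ), i < k → ∀ ρ : OM, aeval ρ (cyclotomic m FF) = 0 →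
      1 - v ρ * w ρ ^ i ≠ 0) :
    RepU m (qPoch x r k) (fun ρ => qPoch (v ρ) (w ρ) k) := by
  unfold qPoch
  exact repU_prod (Finset.range k) _ (fun i ρ => 1 - v ρ * w ρ ^ i)
    (fun i hi => ((hx.mul (hr.pow i)).one_sub
      (fun ρ hρ => hne i (Finset.mem_range.1 hi) ρ hρ)))

-- main conclusion lemma
lemma good_of_rep (hm : 1 < m) (x : LL) (v : OM → OM) (h : Rep m x v)
    (hv : ∀ ρ : OM, aeval ρ (cyclotomic m FF) = 0 → v ρ = 0) :
    ratCongr2 (cyclotomic m FF) x := by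
  obtain ⟨f, g, hg, hxg, hval⟩ := h
  have hroots : ∀ ρ : OM, aeval ρ (cyclotomic m FF) = 0 → aeval ρ f = 0 := by
    intro ρ hρ
    rw [hval ρ hρ, hv ρ hρ, zero_mul]
  have hdvd : cyclotomic m FF ∣ f := by
    by_cases hf0 : f = 0
    · rw [hf0]; exact dvd_zero _
    rw [← Polynomial.map_dvd_map (algebraMap FF OM) (algebraMap FF OM).injective
      (cyclotomic.monic m FF), map_cyclotomic]
    have hsep : (cyclotomic m OM).Separable := by
      apply Polynomial.Separable.of_dvd _ (cyclotomic.dvd_X_pow_sub_one m OM)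
      have h1 : ((X : Polynomial OM) ^ m - C 1).Separable :=
        Polynomial.separable_X_pow_sub_C (1 : OM) (Nat.cast_ne_zero.2 (by omega)) one_ne_zero
      rwa [map_one] at h1
    have hsp : (cyclotomic m OM).Splits := IsAlgClosed.splits _
    apply hsp.dvd_of_roots_le_roots (cyclotomic_ne_zero m OM)
    have hnodup : (cyclotomic m OM).roots.Nodup := Polynomial.nodup_roots hsep
    rw [Multiset.le_iff_subset hnodup]
    intro r hr
    have hr1 : IsRoot (cyclotomic m OM) r := isRoot_of_mem_roots hr
    have hr2 : aeval r (cyclotomic m FF) = 0 := by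
      rw [aeval_def, ← Polynomial.eval_map, map_cyclotomic]
      exact hr1
    have hfmap0 : (f.map (algebraMap FF OM)) ≠ 0 := by
      intro h0
      exact hf0 (Polynomial.map_injective _ (algebraMap FF OM).injective
        (by rw [h0, Polynomial.map_zero]))
    rw [Polynomial.mem_roots hfmap0]
    rw [IsRoot, Polynomial.eval_map, ← aeval_def]
    exact hroots r hr2
  obtain ⟨f2, hf2⟩ := hdvd
  exact ⟨f2, g, hg, by rw [hxg, hf2, map_mul]⟩

end Lemma2Aux


open Lemma2Aux in
/-- Lemma 2 of the paper: the full parametric sum vanishes modulo `Φₘ(q)`. -/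
theorem stmt1 (m : ℕ) (hm : 1 < m) (d : ℕ) (hd : 2 ≤ d) (t : ℤ)
    (hdm : Nat.Coprime d m) (hdt : Int.gcd (d : ℤ) t = 1) :
    let q : RatFunc (RatFunc ℚ) := RatFunc.X
    let a : RatFunc (RatFunc ℚ) := RatFunc.C RatFunc.X
    ratCongr2 (cyclotomic m (RatFunc ℚ))
      (∑ k ∈ Finset.range m,
        qInt q (2 * (d : ℤ) * k + t) *
          (qPoch (q ^ t) (q ^ (d : ℤ)) k ^ 2 * qPoch (a * q ^ t) (q ^ (d : ℤ)) k *
            qPoch (q ^ t / a) (q ^ (d : ℤ)) k) /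
          (qPoch (q ^ (d : ℤ)) (q ^ (d : ℤ)) k ^ 2 * qPoch (a * q ^ (d : ℤ)) (q ^ (d : ℤ)) k *
            qPoch (q ^ (d : ℤ) / a) (q ^ (d : ℤ)) k) *
          q ^ (((d : ℤ) - 2 * t) * k)) := by
  intro q a
  refine Lemma2Aux.good_of_rep hm _
    (fun ρ => ∑ k ∈ Finset.range m,
      qInt ρ (2 * (d : ℤ) * k + t) *
        (qPoch (ρ ^ t) (ρ ^ (d : ℤ)) k ^ 2 * qPoch (alf * ρ ^ t) (ρ ^ (d : ℤ)) k *
          qPoch (ρ ^ t / alf) (ρ ^ (d : ℤ)) k) /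
        (qPoch (ρ ^ (d : ℤ)) (ρ ^ (d : ℤ)) k ^ 2 * qPoch (alf * ρ ^ (d : ℤ)) (ρ ^ (d : ℤ)) k *
          qPoch (ρ ^ (d : ℤ) / alf) (ρ ^ (d : ℤ)) k) *
        ρ ^ (((d : ℤ) - 2 * t) * k)) ?_ ?_
  · -- the Rep statement
    refine rep_sum (Finset.range m) _
      (fun k ρ =>
        qInt ρ (2 * (d : ℤ) * k + t) *
          (qPoch (ρ ^ t) (ρ ^ (d : ℤ)) k ^ 2 * qPoch (alf * ρ ^ t) (ρ ^ (d : ℤ)) k *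
            qPoch (ρ ^ t / alf) (ρ ^ (d : ℤ)) k) /
          (qPoch (ρ ^ (d : ℤ)) (ρ ^ (d : ℤ)) k ^ 2 * qPoch (alf * ρ ^ (d : ℤ)) (ρ ^ (d : ℤ)) k *
            qPoch (ρ ^ (d : ℤ) / alf) (ρ ^ (d : ℤ)) k) *
          ρ ^ (((d : ℤ) - 2 * t) * k)) ?_
    intro k hk
    have hk' : k < m := Finset.mem_range.1 hk
    have hq : RepU m (RatFunc.X : LL) (fun ρ => ρ) := repU_X hm
    have hqz : ∀ z : ℤ, RepU m ((RatFunc.X : LL) ^ z) (fun ρ => ρ ^ z) :=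
      fun z => hq.zpow hm z
    have ha : RepU m (RatFunc.C (RatFunc.X : FF)) (fun _ => alf) := repU_a
    -- RepU for 1 - q
    have h1q : RepU m (1 - (RatFunc.X : LL)) (fun ρ => 1 - ρ) := by
      refine hq.one_sub ?_
      intro ρ hρ
      exact sub_ne_zero_of_ne (fun h => (root_prim hm hρ).ne_one hm h.symm)
    -- nonvanishing of the three denominator families
    have hden1 : ∀ (i : ℕ), i < k → ∀ ρ : OM, aeval ρ (cyclotomic m FF) = 0 →
        1 - ρ ^ (d : ℤ) * (ρ ^ (d : ℤ)) ^ i ≠ 0 := by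
      intro i hi ρ hρ
      have hprim := root_prim hm hρ
      have hρ0 := root_ne_zero hm hρ
      rw [sub_ne_zero]
      intro h1
      have hfu : (ρ ^ (d : ℤ)) ^ i = ρ ^ ((d : ℤ) * i) := by
        rw [← zpow_natCast (ρ ^ (d : ℤ)), ← zpow_mul]
      have h2 : ρ ^ ((d : ℤ) * (i + 1)) = 1 := by
        rw [show ((d : ℤ) * (i + 1)) = (d : ℤ) + (d : ℤ) * i from by push_cast; ring,
          zpow_add₀ hρ0, ← hfu, ← h1]
      have h3 : (m : ℤ) ∣ (d : ℤ) * (i + 1) := (hprim.zpow_eq_one_iff_dvd _).1 h2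
      have h4 : m ∣ d * (i + 1) := by exact_mod_cast h3
      have h5 : m ∣ (i + 1) := (Nat.Coprime.dvd_of_dvd_mul_left (hdm.symm) h4)
      have := Nat.le_of_dvd (by omega) h5
      omega
    have hden2 : ∀ (i : ℕ), i < k → ∀ ρ : OM, aeval ρ (cyclotomic m FF) = 0 →
        1 - alf * ρ ^ (d : ℤ) * (ρ ^ (d : ℤ)) ^ i ≠ 0 := by
      intro i hi ρ hρ
      have hρ0 := root_ne_zero hm hρ
      rw [sub_ne_zero]
      intro h1
      have hfu : (ρ ^ (d : ℤ)) ^ i = ρ ^ ((d : ℤ) * i) := by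
        rw [← zpow_natCast (ρ ^ (d : ℤ)), ← zpow_mul]
      refine alf_cond1 hm hρ ((d : ℤ) + (d : ℤ) * i) ?_
      rw [zpow_add₀ hρ0, ← hfu, ← mul_assoc, ← h1]
    have hden3 : ∀ (i : ℕ), i < k → ∀ ρ : OM, aeval ρ (cyclotomic m FF) = 0 →
        1 - ρ ^ (d : ℤ) / alf * (ρ ^ (d : ℤ)) ^ i ≠ 0 := by
      intro i hi ρ hρ
      have hρ0 := root_ne_zero hm hρ
      rw [sub_ne_zero]
      intro h1
      have hfu : (ρ ^ (d : ℤ)) ^ i = ρ ^ ((d : ℤ) * i) := by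
        rw [← zpow_natCast (ρ ^ (d : ℤ)), ← zpow_mul]
      refine alf_cond2 hm hρ ((d : ℤ) + (d : ℤ) * i) ?_
      rw [zpow_add₀ hρ0, ← hfu, zpow_natCast]
      field_simp [alf_ne_zero] at h1
      rw [h1, zpow_natCast]
    -- assemble
    have hA : Rep m (qInt (RatFunc.X : LL) (2 * (d : ℤ) * k + t))
        (fun ρ => qInt ρ (2 * (d : ℤ) * k + t)) := by
      unfold qInt
      exact ((hqz (2 * (d : ℤ) * k + t)).toRep.one_sub).div hm h1q
    have hN1 : Rep m (qPoch ((RatFunc.X : LL) ^ t) ((RatFunc.X : LL) ^ (d : ℤ)) k)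
        (fun ρ => qPoch (ρ ^ t) (ρ ^ (d : ℤ)) k) :=
      rep_qPoch (hqz t).toRep (hqz (d : ℤ)).toRep k
    have hN2 : Rep m (qPoch (RatFunc.C (RatFunc.X : FF) * (RatFunc.X : LL) ^ t)
        ((RatFunc.X : LL) ^ (d : ℤ)) k)
        (fun ρ => qPoch (alf * ρ ^ t) (ρ ^ (d : ℤ)) k) :=
      rep_qPoch (ha.toRep.mul (hqz t).toRep) (hqz (d : ℤ)).toRep k
    have hN3 : Rep m (qPoch ((RatFunc.X : LL) ^ t / RatFunc.C (RatFunc.X : FF))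
        ((RatFunc.X : LL) ^ (d : ℤ)) k)
        (fun ρ => qPoch (ρ ^ t / alf) (ρ ^ (d : ℤ)) k) :=
      rep_qPoch ((hqz t).toRep.div hm ha) (hqz (d : ℤ)).toRep k
    have hD1 : RepU m (qPoch ((RatFunc.X : LL) ^ (d : ℤ)) ((RatFunc.X : LL) ^ (d : ℤ)) k)
        (fun ρ => qPoch (ρ ^ (d : ℤ)) (ρ ^ (d : ℤ)) k) :=
      repU_qPoch (hqz (d : ℤ)) (hqz (d : ℤ)) k (fun i hi ρ hρ => hden1 i hi ρ hρ)
    have hD2 : RepU m (qPoch (RatFunc.C (RatFunc.X : FF) * (RatFunc.X : LL) ^ (d : ℤ))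
        ((RatFunc.X : LL) ^ (d : ℤ)) k)
        (fun ρ => qPoch (alf * ρ ^ (d : ℤ)) (ρ ^ (d : ℤ)) k) :=
      repU_qPoch (ha.mul (hqz (d : ℤ))) (hqz (d : ℤ)) k (fun i hi ρ hρ => hden2 i hi ρ hρ)
    have hD3 : RepU m (qPoch ((RatFunc.X : LL) ^ (d : ℤ) / RatFunc.C (RatFunc.X : FF))
        ((RatFunc.X : LL) ^ (d : ℤ)) k)
        (fun ρ => qPoch (ρ ^ (d : ℤ) / alf) (ρ ^ (d : ℤ)) k) :=
      repU_qPoch ((hqz (d : ℤ)).div hm ha) (hqz (d : ℤ)) k (fun i hi ρ hρ => hden3 i hi ρ hρ)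
    exact ((hA.mul (((hN1.pow 2).mul hN2).mul hN3)).div hm
      (((hD1.pow 2).mul hD2).mul hD3)).mul (hqz (((d : ℤ) - 2 * t) * k)).toRep
  · -- value vanishes at the roots
    intro ρ hρ
    exact key_sum m d hm hdm t ρ alf (root_prim hm hρ) alf_ne_zero
      (alf_cond1 hm hρ) (alf_cond2 hm hρ)
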